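/- Let K be a field, U a finite-dimensional K-vector space of dimension d ≥ 1, and let U^{⊕d} be the direct sum of d copies of U. Then there exists an injective K-linear map ι from the tensor algebra T(U^{⊕d}) to the tensor algebra T(K ⊕ U) which is End_K(U)-equivariant: for every g ∈ End_K(U), ι ∘ T(g^{⊕d}) = T(id_K ⊕ g) ∘ ι, where g^{⊕d} acts as g on each summand of U^{⊕d}, id_K ⊕ g is the endomorphism of K ⊕ U acting as the identity on K and as g on U, and T(h) denotes the algebra endomorphism of a tensor algebra induced functorially by a linear endomorphism h (acting as h^{⊗i} in each tensor degree i). -/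

import Mathlib

lemma basisFreeMonoid_apply' {R X : Type*} [CommSemiring R] (w : FreeMonoid X) :
    FreeAlgebra.basisFreeMonoid R X w = FreeMonoid.lift (FreeAlgebra.ι R) w := by
  rw [FreeAlgebra.basisFreeMonoid, Module.Basis.map_apply, Finsupp.coe_basisSingleOne,
    FreeAlgebra.equivMonoidAlgebraFreeMonoid]
  rw [LinearEquiv.symm_trans_apply]
  rw [show (MonoidAlgebra.coeffLinearEquiv R).symm (Finsupp.single w (1:R)) = MonoidAlgebra.single w (1:R) from rfl]
  erw [MonoidAlgebra.lift_single]
  rw [one_smul]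

lemma tensorAlgebra_basis_apply {κ R M : Type*} [CommSemiring R] [AddCommMonoid M] [Module R M]
    (b : Module.Basis κ R M) (w : FreeMonoid κ) :
    b.tensorAlgebra w = FreeMonoid.lift (fun i => TensorAlgebra.ι R (b i)) w := by
  rw [Module.Basis.tensorAlgebra, Module.Basis.map_apply, basisFreeMonoid_apply']
  induction w using FreeMonoid.recOn with
  | one => simp
  | of_mul x xs ih =>
    simp only [AlgEquiv.toLinearEquiv_apply] at ih ⊢
    simp [ih]

lemma repl_cons_inj {α : Type*} {a : α} :
    ∀ (j j' : ℕ) {b b' : α} {s s' : List α}, a ≠ b → a ≠ b' →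
      List.replicate j a ++ b :: s = List.replicate j' a ++ b' :: s' →
      j = j' ∧ b = b' ∧ s = s'
  | 0, 0, b, b', s, s', _, _, h => by simpa using h
  | 0, j'+1, b, b', s, s', hb, _, h => by
      simp only [List.replicate_succ, List.replicate_zero, List.nil_append, List.cons_append,
        List.cons.injEq] at h
      exact absurd h.1.symm hb
  | j+1, 0, b, b', s, s', _, hb', h => by
      simp only [List.replicate_succ, List.replicate_zero, List.nil_append, List.cons_append,
        List.cons.injEq] at h
      exact absurd h.1 hb'
  | j+1, j'+1, b, b', s, s', hb, hb', h => by
      simp only [List.replicate_succ, List.cons_append, List.cons.injEq, true_and] at h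
      obtain ⟨h1, h2, h3⟩ := repl_cons_inj j j' hb hb' h
      exact ⟨by omega, h2, h3⟩

lemma flatten_code_inj {α β : Type*} {a : α} {f : β → ℕ} {g : β → α} {h : β → ℕ}
    (hg : ∀ x, a ≠ g x)
    (hinj : ∀ x y, f x = f y → g x = g y → x = y) :
    Function.Injective
      (fun l : List β =>
        (l.map fun x => List.replicate (f x) a ++ g x :: List.replicate (h x) a).flatten) := by
  intro l l' hl
  induction l generalizing l' with
  | nil =>
    cases l' with
    | nil => rfl
    | cons y t =>
      exfalso
      simp only [List.map_nil, List.flatten_nil, List.map_cons, List.flatten_cons] at hl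
      apply_fun List.length at hl
      simp at hl
  | cons x t ih =>
    cases l' with
    | nil =>
      exfalso
      simp only [List.map_nil, List.flatten_nil, List.map_cons, List.flatten_cons] at hl
      apply_fun List.length at hl
      simp at hl
    | cons y t' =>
      simp only [List.map_cons, List.flatten_cons, List.append_assoc, List.cons_append] at hl
      obtain ⟨h1, h2, h3⟩ := repl_cons_inj (f x) (f y) (hg x) (hg y) hl
      have hxy : x = y := hinj x y h1 h2
      subst hxy
      have h4 : (t.map fun x => List.replicate (f x) a ++ g x :: List.replicate (h x) a).flatten
          = (t'.map fun x => List.replicate (f x) a ++ g x :: List.replicate (h x) a).flatten :=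
        List.append_cancel_left h3
      rw [ih h4]

/-- The algebra endomorphism of a tensor algebra induced functorially by a linear map, acting as
`h^{⊗i}` in each tensor degree `i`. -/
noncomputable def mapTA {K : Type*} [CommSemiring K] {M N : Type*}
    [AddCommMonoid M] [Module K M] [AddCommMonoid N] [Module K N] (h : M →ₗ[K] N) :
    TensorAlgebra K M →ₐ[K] TensorAlgebra K N :=
  TensorAlgebra.lift K ((TensorAlgebra.ι K).comp h)

theorem aux_tensorAlgebra_embedding (K : Type*) [Field K] (U : Type*) [AddCommGroup U] [Module K U]
    (d : ℕ) (hd : 1 ≤ d) (bU : Module.Basis (Fin d) K U) :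
    ∃ ι : TensorAlgebra K (Fin d → U) →ₗ[K] TensorAlgebra K (K × U),
      Function.Injective ι ∧
      ∀ g : Module.End K U,
        ι ∘ₗ (mapTA (g.compLeft (Fin d))).toLinearMap =
          (mapTA ((LinearMap.id : K →ₗ[K] K).prodMap g)).toLinearMap ∘ₗ ι := by
  classical
  set e : TensorAlgebra K (K × U) := TensorAlgebra.ι K ((1 : K), (0 : U)) with he
  set φ : (Fin d → U) →ₗ[K] TensorAlgebra K (K × U) :=
    ∑ j : Fin d, (LinearMap.mulRight K (e ^ (d - 1 - (j : ℕ)))).comp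
      ((LinearMap.mulLeft K (e ^ (j : ℕ))).comp
        ((TensorAlgebra.ι K).comp ((LinearMap.inr K K U).comp (LinearMap.proj j)))) with hφdef
  have hφ : ∀ v : Fin d → U,
      φ v = ∑ j : Fin d, e ^ (j : ℕ) * TensorAlgebra.ι K ((0 : K), v j) * e ^ (d - 1 - (j : ℕ)) := by
    intro v
    rw [hφdef]
    simp [LinearMap.sum_apply, mul_assoc]
  set A : TensorAlgebra K (Fin d → U) →ₐ[K] TensorAlgebra K (K × U) := TensorAlgebra.lift K φ
    with hAdef
  have hA : ∀ v, A (TensorAlgebra.ι K v) = φ v := fun v => TensorAlgebra.lift_ι_apply _ _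
  refine ⟨A.toLinearMap, ?_, ?_⟩
  · -- injectivity
    set bP : Module.Basis ((_ : Fin d) × Fin d) K (Fin d → U) := Pi.basis fun _ => bU with hbP
    set bKU : Module.Basis (Unit ⊕ Fin d) K (K × U) := (Module.Basis.singleton Unit K).prod bU with hbKU
    have hbKUl : bKU (Sum.inl ()) = ((1 : K), (0 : U)) := by
      apply Prod.ext <;> simp [hbKU, Module.Basis.singleton_apply]
    have hbKUr : ∀ i, bKU (Sum.inr i) = ((0 : K), bU i) := by
      intro i; apply Prod.ext <;> simp [hbKU]
    set blockL : ((_ : Fin d) × Fin d) → List (Unit ⊕ Fin d) := fun x =>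
      List.replicate (x.1 : ℕ) (Sum.inl ()) ++ Sum.inr x.2 ::
        List.replicate (d - 1 - (x.1 : ℕ)) (Sum.inl ()) with hblock
    have key2 : ∀ x, A (TensorAlgebra.ι K (bP x))
        = ((blockL x).map fun y => TensorAlgebra.ι K (bKU y)).prod := by
      intro x
      rw [hA, hφ]
      rw [show bP x = Pi.single x.1 (bU x.2) from Pi.basis_apply _ _]
      rw [Finset.sum_eq_single x.1]
      · simp only [Pi.single_eq_same, hblock]
        rw [List.map_append, List.map_cons, List.map_replicate, List.map_replicate,
          List.prod_append, List.prod_cons, List.prod_replicate, List.prod_replicate,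
          hbKUl, hbKUr, ← he, mul_assoc]
      · intro j _ hj
        rw [Pi.single_eq_of_ne hj]
        simp [show ((0 : K), (0 : U)) = (0 : K × U) from rfl]
      · intro h; exact absurd (Finset.mem_univ _) h
    have key3 : ∀ w : FreeMonoid ((_ : Fin d) × Fin d),
        A (bP.tensorAlgebra w)
          = bKU.tensorAlgebra (FreeMonoid.ofList ((FreeMonoid.toList w).map blockL).flatten) := by
      intro w
      rw [tensorAlgebra_basis_apply, tensorAlgebra_basis_apply, FreeMonoid.lift_apply,
        FreeMonoid.lift_apply, map_list_prod, List.map_map, FreeMonoid.toList_ofList,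
        List.map_flatten, List.prod_flatten, List.map_map, List.map_map]
      refine congrArg List.prod (List.map_congr_left fun x _ => ?_)
      simpa [Function.comp] using key2 x
    have hFinj : Function.Injective
        (fun w : FreeMonoid ((_ : Fin d) × Fin d) =>
          FreeMonoid.ofList ((FreeMonoid.toList w).map blockL).flatten) := by
      intro w w' hw
      have h2 := flatten_code_inj (a := Sum.inl ()) (f := fun x : ((_ : Fin d) × Fin d) => (x.1 : ℕ))
        (g := fun x : ((_ : Fin d) × Fin d) => (Sum.inr x.2 : Unit ⊕ Fin d))
        (h := fun x : ((_ : Fin d) × Fin d) => d - 1 - (x.1 : ℕ))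
        (fun x => by simp)
        (by
          rintro ⟨x1, x2⟩ ⟨y1, y2⟩ h1 hg
          simp only at h1 hg
          obtain rfl : x1 = y1 := Fin.val_injective h1
          obtain rfl : x2 = y2 := by simpa using hg
          rfl)
      have hlist : ((FreeMonoid.toList w).map blockL).flatten
          = ((FreeMonoid.toList w').map blockL).flatten := by
        have := congrArg FreeMonoid.toList hw
        simpa [Function.comp_def] using this
      exact FreeMonoid.toList.injective (h2 hlist)
    have hrepr : A.toLinearMap
        = Finsupp.linearCombination K
            (fun w : FreeMonoid ((_ : Fin d) × Fin d) =>
              bKU.tensorAlgebra (FreeMonoid.ofList ((FreeMonoid.toList w).map blockL).flatten))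
          ∘ₗ bP.tensorAlgebra.repr.toLinearMap := by
      apply bP.tensorAlgebra.ext
      intro w
      simp only [AlgHom.toLinearMap_apply, LinearMap.comp_apply, LinearEquiv.coe_toLinearMap,
        Module.Basis.repr_self, Finsupp.linearCombination_single, one_smul]
      exact key3 w
    have hLI : LinearIndependent K
        (fun w : FreeMonoid ((_ : Fin d) × Fin d) =>
          bKU.tensorAlgebra (FreeMonoid.ofList ((FreeMonoid.toList w).map blockL).flatten)) :=
      bKU.tensorAlgebra.linearIndependent.comp _ hFinj
    have : ⇑A.toLinearMap = ⇑(Finsupp.linearCombination K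
            (fun w : FreeMonoid ((_ : Fin d) × Fin d) =>
              bKU.tensorAlgebra (FreeMonoid.ofList ((FreeMonoid.toList w).map blockL).flatten)))
          ∘ ⇑bP.tensorAlgebra.repr.toLinearMap := by
      rw [hrepr]; rfl
    rw [this]
    exact Function.Injective.comp hLI bP.tensorAlgebra.repr.injective

  · intro g
    have : A.comp (mapTA (g.compLeft (Fin d)))
        = (mapTA ((LinearMap.id : K →ₗ[K] K).prodMap g)).comp A := by
      apply TensorAlgebra.hom_ext
      apply LinearMap.ext
      intro v
      simp only [LinearMap.comp_apply, AlgHom.toLinearMap_apply, AlgHom.comp_apply]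
      rw [show (mapTA (g.compLeft (Fin d))) (TensorAlgebra.ι K v)
          = TensorAlgebra.ι K (g ∘ v) by simp [mapTA, TensorAlgebra.lift_ι_apply]; rfl]
      rw [hA, hA, hφ, hφ, map_sum]
      refine Finset.sum_congr rfl fun j _ => ?_
      rw [map_mul, map_mul, map_pow, map_pow]
      simp [mapTA, TensorAlgebra.lift_ι_apply, he, Function.comp]
    calc A.toLinearMap ∘ₗ (mapTA (g.compLeft (Fin d))).toLinearMap
        = (A.comp (mapTA (g.compLeft (Fin d)))).toLinearMap := rfl
      _ = ((mapTA ((LinearMap.id : K →ₗ[K] K).prodMap g)).comp A).toLinearMap := by rw [this]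
      _ = _ := rfl


/-- For a `d`-dimensional space `U` (`d ≥ 1`), there is an injective linear map from the tensor
algebra of `U^{⊕d}` to the tensor algebra of `K ⊕ U` which is equivariant for the functorial
`End_K(U)`-actions: `ι ∘ T(g^{⊕d}) = T(id_K ⊕ g) ∘ ι`. -/
theorem tensorAlgebra_embedding_equivariant
    (K : Type*) [Field K] (U : Type*) [AddCommGroup U] [Module K U]
    [FiniteDimensional K U] (d : ℕ) (hd : 1 ≤ d) (hdim : Module.finrank K U = d) :
    ∃ ι : TensorAlgebra K (Fin d → U) →ₗ[K] TensorAlgebra K (K × U),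
      Function.Injective ι ∧
      ∀ g : Module.End K U,
        ι ∘ₗ (mapTA (g.compLeft (Fin d))).toLinearMap =
          (mapTA ((LinearMap.id : K →ₗ[K] K).prodMap g)).toLinearMap ∘ₗ ι := by
  exact aux_tensorAlgebra_embedding K U d hd ((Module.finBasis K U).reindex (finCongr hdim))
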